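/- Let g_1,…,g_d be a C^{1+ε} Cantor system on [0,1]. Then there exists K > 0 such that for all j ≠ j' in Σ_d^dual and all n ≥ #(j∩j'), |S_n(j|_n) − S_n(j'|_n)|_∞ ≤ K · |I_{j∩j'}|^ε. -/

import Mathlib

open Set Filter

noncomputable section

/-- The unit interval `[0,1] ⊆ ℝ`. -/
abbrev I01 : Set ℝ := Set.Icc (0:ℝ) 1

/-- `ψ` satisfies an `ε`-Hölder bound with constant `H` on `[0,1]`. -/
def HolderBoundOn01 (ε H : ℝ) (ψ : ℝ → ℝ) : Prop :=
  ∀ x ∈ I01, ∀ y ∈ I01, |ψ x - ψ y| ≤ H * |x - y| ^ ε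

/-- A `C^{k+ε}` Cantor system on `[0,1]` with `d` branches: each branch `g i` is a
`C^k` increasing contraction of `[0,1]` with `ε`-Hölder `k`-th derivative, the images
`g i ([0,1])` are disjoint closed intervals in increasing order, `g 0 0 = 0` and
`g (d-1) 1 = 1`. -/
structure IsCantorSystem {d : ℕ} (k : ℕ) (ε : ℝ) (g : Fin d → ℝ → ℝ) : Prop where
  maps : ∀ i, Set.MapsTo (g i) I01 I01
  smooth : ∀ i, ContDiffOn ℝ k (g i) I01
  holder : ∀ i, ∃ H > 0, HolderBoundOn01 ε H (iteratedDerivWithin k (g i) I01)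
  deriv_pos : ∀ i, ∀ x ∈ I01, 0 < derivWithin (g i) I01 x
  deriv_lt_one : ∀ i, ∀ x ∈ I01, derivWithin (g i) I01 x < 1
  ordered : ∀ i j : Fin d, i < j → g i 1 < g j 0
  first : ∀ i : Fin d, (i : ℕ) = 0 → g i 0 = 0
  last : ∀ i : Fin d, (i : ℕ) = d - 1 → g i 1 = 1

/-- For a finite word `w = [w₁,…,wₙ]`, `wordMap g w = g_{wₙ} ∘ ⋯ ∘ g_{w₁}` (i.e. `G_w`). -/
def wordMap {d : ℕ} (g : Fin d → ℝ → ℝ) : List (Fin d) → ℝ → ℝ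
  | [] => id
  | i :: w => fun x => wordMap g w (g i x)

/-- `|I_w|`, the length of the interval `I_w = G_w([0,1]) = [G_w 0, G_w 1]`. -/
def wordLen {d : ℕ} (g : Fin d → ℝ → ℝ) (w : List (Fin d)) : ℝ :=
  wordMap g w 1 - wordMap g w 0

/-- The scaling data of the word `w`: the first `d` coordinates are the ratios
`|I_{i·w}|/|I_w|`, the last `d-1` coordinates are the `d-1` gap lengths between the
consecutive children `I_{1·w},…,I_{d·w}` divided by `|I_w|`. -/
def scalingData {d : ℕ} (g : Fin d → ℝ → ℝ) (w : List (Fin d)) : Fin (2*d-1) → ℝ :=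
  fun m =>
    if h : (m : ℕ) < d then
      wordLen g ((⟨(m : ℕ), h⟩ : Fin d) :: w) / wordLen g w
    else
      (wordMap g w (g ⟨(m : ℕ) - d + 1, by have := m.isLt; omega⟩ 0)
        - wordMap g w (g ⟨(m : ℕ) - d, by have := m.isLt; omega⟩ 1)) / wordLen g w

/-- The open simplex `Simp_{2d-2} ⊆ (0,1)^{2d-1}` of vectors with coordinate sum `1`. -/
def Simp (d : ℕ) : Set (Fin (2*d-1) → ℝ) :=
  {s | (∀ m, s m ∈ Set.Ioo (0:ℝ) 1) ∧ ∑ m, s m = 1}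

/-- The initial word `j|_n = (j_1,…,j_n)` of a sequence `j ∈ Σ_d^dual = {1,…,d}^ℕ`. -/
def dword {d : ℕ} (j : ℕ → Fin d) (n : ℕ) : List (Fin d) :=
  List.ofFn (fun i : Fin n => j i)

/-- `S` is the scaling function of the system `g`:
`S(j) = lim_{n→∞} S_n(j|_n)` for every `j ∈ Σ_d^dual`. -/
def HasScalingFunction {d : ℕ} (g : Fin d → ℝ → ℝ) (S : (ℕ → Fin d) → Fin (2*d-1) → ℝ) : Prop :=
  ∀ j : ℕ → Fin d,
    Filter.Tendsto (fun n => scalingData g (dword j n)) Filter.atTop (nhds (S j))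

/-- `ρ_S(j,j')` where `n = #(j∩j')`:
`ρ_S(j,j') = sup_w ∏_{t=1}^{n} S((j_{t+1},…,j_n)·w)_{j_t}` (depends only on `j` and `n`). -/
def rhoS {d : ℕ} (S : (ℕ → Fin d) → Fin (2*d-1) → ℝ) (j : ℕ → Fin d) (n : ℕ) : ℝ :=
  ⨆ w : ℕ → Fin d, ∏ t ∈ Finset.range n,
    S (fun m => if t + 1 + m < n then j (t + 1 + m) else w (t + 1 + m - n))
      ⟨((j t) : ℕ), by have := (j t).isLt; omega⟩

/-- Given a scaling vector `s ∈ Simp_{2d-2}`, the partition of `[0,1]` it determines has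
`i`-th child interval starting at `childLeft s i = ∑_{m<i} (s_m + s_{d+m})`. -/
def childLeft {d : ℕ} (s : Fin (2*d-1) → ℝ) (i : Fin d) : ℝ :=
  ∑ m ∈ (Finset.range (i : ℕ)).attach,
    (s ⟨(m : ℕ), by have h := Finset.mem_range.mp m.2; have := i.isLt; omega⟩
      + s ⟨d + (m : ℕ), by have h := Finset.mem_range.mp m.2; have := i.isLt; omega⟩)

/-- The right endpoint of the `i`-th child interval of the partition determined by `s`. -/
def childRight {d : ℕ} (s : Fin (2*d-1) → ℝ) (i : Fin d) : ℝ :=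
  childLeft s i + s ⟨(i : ℕ), by have := i.isLt; omega⟩

/-- `A(j)`: the set of `2d` endpoints of the `d` child intervals of the partition of `[0,1]`
determined by the scaling vector `s = S(j)`. -/
def Apts {d : ℕ} (s : Fin (2*d-1) → ℝ) : Set ℝ :=
  ⋃ i : Fin d, {childLeft s i, childRight s i}

/-- An increasing `C^k` diffeomorphism of `[0,1]`. -/
structure IsDiffeo01 (k : ℕ) (φ : ℝ → ℝ) : Prop where
  smooth : ContDiffOn ℝ k φ I01
  mono : StrictMonoOn φ I01
  deriv_pos : ∀ x ∈ I01, 0 < derivWithin φ I01 x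
  bij : Set.BijOn φ I01 I01

/-- `D^k(A₁,A₂)`: increasing `C^k` diffeomorphisms of `[0,1]` mapping `A₁` onto `A₂`. -/
def Dk (k : ℕ) (A₁ A₂ : Set ℝ) : Set (ℝ → ℝ) :=
  {φ | IsDiffeo01 k φ ∧ φ '' A₁ = A₂}

/-- `D^k_var(M)(A₁,A₂)`: members of `D^k(A₁,A₂)` whose `k`-th derivative has variation `< M`. -/
def DkVar (k : ℕ) (M : ℝ) (A₁ A₂ : Set ℝ) : Set (ℝ → ℝ) :=
  {φ | φ ∈ Dk k A₁ A₂ ∧ ∀ x ∈ I01, ∀ y ∈ I01,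
    |iteratedDerivWithin k φ I01 x - iteratedDerivWithin k φ I01 y| < M}

/-- The renormalization `(L')⁻¹ ∘ φ ∘ L` of `φ`, where `L, L'` are the increasing affine
bijections from `[0,1]` onto `[a,b]` and `[a',b']` respectively. -/
def renorm (a b a' b' : ℝ) (φ : ℝ → ℝ) : ℝ → ℝ :=
  fun x => (φ (a + (b - a) * x) - a') / (b' - a')

/-- `R_{j₀} φ`: restrict `φ` to the `j₀`-th child interval of the partition determined by `s`
(mapped to the `j₀`-th child interval of the partition determined by `s'`) and renormalize. -/
def Rmap {d : ℕ} (s s' : Fin (2*d-1) → ℝ) (j₀ : Fin d) (φ : ℝ → ℝ) : ℝ → ℝ :=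
  renorm (childLeft s j₀) (childRight s j₀) (childLeft s' j₀) (childRight s' j₀) φ

/-- `j₀·j = (j₀, j_1, j_2, …)`. -/
def consSeq {d : ℕ} (j₀ : Fin d) (j : ℕ → Fin d) : ℕ → Fin d :=
  fun m => if m = 0 then j₀ else j (m - 1)

/-- The Cantor set of the system: `C = ⋂_{n ≥ 1} ⋃_{w of length n} I_w`. -/
def systemCantorSet {d : ℕ} (g : Fin d → ℝ → ℝ) : Set ℝ :=
  ⋂ n : ℕ, ⋃ w ∈ {w : List (Fin d) | w.length = n + 1}, wordMap g w '' I01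

end

section Aux

variable {d : ℕ}

lemma mvt_g (g : ℝ → ℝ) (hsm : ContDiffOn ℝ 1 g I01) {x y : ℝ}
    (hx : x ∈ I01) (hy : y ∈ I01) (hxy : x < y) :
    ∃ c ∈ Set.Ioo x y, g y - g x = derivWithin g I01 c * (y - x) := by
  have hdiff : ∀ c ∈ Set.Ioo x y, HasDerivAt g (derivWithin g I01 c) c := by
    intro c hc
    have hcI : c ∈ Set.Ioo (0:ℝ) 1 := ⟨lt_of_le_of_lt hx.1 hc.1, lt_of_lt_of_le hc.2 hy.2⟩
    have h2 := ((hsm.differentiableOn one_ne_zero) c (Set.Ioo_subset_Icc_self hcI)).hasDerivWithinAt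
    exact h2.hasDerivAt (Icc_mem_nhds hcI.1 hcI.2)
  obtain ⟨c, hc, hs⟩ := exists_hasDerivAt_eq_slope g _ hxy
    (hsm.continuousOn.mono (Set.Icc_subset_Icc hx.1 hy.2)) hdiff
  exact ⟨c, hc, by rw [hs, div_mul_cancel₀ _ (sub_ne_zero.mpr hxy.ne')]⟩

/-- Two-sided increment bound from two-sided derivative bounds. -/
lemma incr_bounds (g : ℝ → ℝ) (hsm : ContDiffOn ℝ 1 g I01) (δ lam : ℝ)
    (hδ : ∀ x ∈ I01, δ ≤ derivWithin g I01 x)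
    (hlam : ∀ x ∈ I01, derivWithin g I01 x ≤ lam)
    {x y : ℝ} (hx : x ∈ I01) (hy : y ∈ I01) (hxy : x ≤ y) :
    δ * (y - x) ≤ g y - g x ∧ g y - g x ≤ lam * (y - x) := by
  rcases eq_or_lt_of_le hxy with rfl | hlt
  · simp
  · obtain ⟨c, hc, hcs⟩ := mvt_g g hsm hx hy hlt
    have hcI : c ∈ I01 := ⟨le_trans hx.1 hc.1.le, le_trans hc.2.le hy.2⟩
    constructor
    · rw [hcs]; exact mul_le_mul_of_nonneg_right (hδ c hcI) (by linarith)
    · rw [hcs]; exact mul_le_mul_of_nonneg_right (hlam c hcI) (by linarith)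

/-- Single-map distortion estimate. -/
lemma single_step (ε : ℝ) (hε : 0 < ε) (g : ℝ → ℝ) (hsm : ContDiffOn ℝ 1 g I01)
    (δ H : ℝ) (hδpos : 0 < δ) (hH0 : 0 ≤ H)
    (hδ : ∀ x ∈ I01, δ ≤ derivWithin g I01 x)
    (hH : ∀ x ∈ I01, ∀ y ∈ I01,
      |derivWithin g I01 x - derivWithin g I01 y| ≤ H * |x - y| ^ ε)
    {A B α β : ℝ} (hA : A ∈ I01) (hB : B ∈ I01) (h1 : A ≤ α) (h2 : α ≤ β) (h3 : β ≤ B)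
    (hAB : A < B) :
    (β - α) / (B - A) * Real.exp (-(H / δ * (B - A) ^ ε)) ≤ (g β - g α) / (g B - g A) ∧
      (g β - g α) / (g B - g A) ≤ (β - α) / (B - A) * Real.exp (H / δ * (B - A) ^ ε) := by
  have hα : α ∈ I01 := ⟨le_trans hA.1 h1, le_trans h2 (le_trans h3 hB.2)⟩
  have hβ : β ∈ I01 := ⟨le_trans hα.1 h2, le_trans h3 hB.2⟩
  obtain ⟨η, hη, hηs⟩ := mvt_g g hsm hA hB hAB
  have hηI : η ∈ I01 := ⟨le_trans hA.1 hη.1.le, le_trans hη.2.le hB.2⟩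
  have hgη : 0 < derivWithin g I01 η := lt_of_lt_of_le hδpos (hδ η hηI)
  have hBA : (0:ℝ) < B - A := by linarith
  have hgBA : 0 < g B - g A := by rw [hηs]; positivity
  rcases eq_or_lt_of_le h2 with rfl | hlt
  · simp only [sub_self, zero_div, zero_mul]
    constructor <;> positivity
  · obtain ⟨ξ, hξ, hξs⟩ := mvt_g g hsm hα hβ hlt
    have hξI : ξ ∈ I01 := ⟨le_trans hα.1 hξ.1.le, le_trans hξ.2.le hβ.2⟩
    have hgξ : 0 < derivWithin g I01 ξ := lt_of_lt_of_le hδpos (hδ ξ hξI)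
    have hβα : (0:ℝ) < β - α := by linarith
    -- |ξ - η| ≤ B - A
    have hd1 : A ≤ ξ := by linarith [hξ.1]
    have hd2 : ξ ≤ B := by linarith [hξ.2]
    have habs : |ξ - η| ^ ε ≤ (B - A) ^ ε := by
      apply Real.rpow_le_rpow (abs_nonneg _) _ hε.le
      rw [abs_sub_le_iff]; constructor <;> [linarith [hη.1, hη.2]; linarith [hη.1, hη.2]]
    have hs0 : (0:ℝ) ≤ (B - A) ^ ε := Real.rpow_nonneg hBA.le ε
    have key : ∀ u v : ℝ, u ∈ I01 → v ∈ I01 → |u - v| ^ ε ≤ (B - A) ^ ε →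
        0 < derivWithin g I01 v →
        derivWithin g I01 u / derivWithin g I01 v ≤ Real.exp (H / δ * (B - A) ^ ε) := by
      intro u v hu hv huv hv0
      have h1 : derivWithin g I01 u - derivWithin g I01 v ≤ H * (B - A) ^ ε := by
        have habs2 : derivWithin g I01 u - derivWithin g I01 v ≤ H * |u - v| ^ ε :=
          le_trans (le_abs_self _) (hH u hu v hv)
        exact le_trans habs2 (mul_le_mul_of_nonneg_left huv hH0)
      have hδv : δ ≤ derivWithin g I01 v := hδ v hv
      have hc0 : 0 ≤ H / δ * (B - A) ^ ε := by positivity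
      have hr : derivWithin g I01 u / derivWithin g I01 v ≤ 1 + H / δ * (B - A) ^ ε := by
        rw [div_le_iff₀ hv0]
        have hid : H / δ * (B - A) ^ ε * δ = H * (B - A) ^ ε := by field_simp
        nlinarith [mul_le_mul_of_nonneg_left hδv hc0]
      exact le_trans hr (by linarith [Real.add_one_le_exp (H / δ * (B - A) ^ ε)])
    have habs' : |η - ξ| ^ ε ≤ (B - A) ^ ε := by rwa [abs_sub_comm]
    have hup := key ξ η hξI hηI habs hgη
    have hlo := key η ξ hηI hξI habs' hgξ
    have hratio : (g β - g α) / (g B - g A)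
        = (β - α) / (B - A) * (derivWithin g I01 ξ / derivWithin g I01 η) := by
      rw [hξs, hηs]; field_simp
    constructor
    · rw [hratio]
      apply mul_le_mul_of_nonneg_left _ (by positivity)
      rw [le_div_iff₀ hgη]
      have h5 : derivWithin g I01 η ≤ Real.exp (H / δ * (B - A) ^ ε) * derivWithin g I01 ξ :=
        (div_le_iff₀ hgξ).mp hlo
      calc Real.exp (-(H / δ * (B - A) ^ ε)) * derivWithin g I01 η
          ≤ Real.exp (-(H / δ * (B - A) ^ ε)) *
            (Real.exp (H / δ * (B - A) ^ ε) * derivWithin g I01 ξ) :=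
            mul_le_mul_of_nonneg_left h5 (Real.exp_pos _).le
        _ = derivWithin g I01 ξ := by rw [← mul_assoc, ← Real.exp_add]; simp
    · rw [hratio]
      apply mul_le_mul_of_nonneg_left _ (by positivity)
      exact hup

lemma wordMap_mem (g : Fin d → ℝ → ℝ) (hmaps : ∀ i, Set.MapsTo (g i) I01 I01) :
    ∀ (w : List (Fin d)) {x : ℝ}, x ∈ I01 → wordMap g w x ∈ I01 := by
  intro w
  induction w with
  | nil => intro x hx; exact hx
  | cons i w ih => intro x hx; exact ih (hmaps i hx)

lemma wordMap_append (g : Fin d → ℝ → ℝ) (u v : List (Fin d)) (x : ℝ) :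
    wordMap g (u ++ v) x = wordMap g v (wordMap g u x) := by
  induction u generalizing x with
  | nil => rfl
  | cons i u ih => exact ih (g i x)

/-- Main distortion estimate for words, by induction on the word. -/
lemma word_distortion (ε : ℝ) (hε : 0 < ε) (g : Fin d → ℝ → ℝ)
    (hmaps : ∀ i, Set.MapsTo (g i) I01 I01)
    (hsm : ∀ i, ContDiffOn ℝ 1 (g i) I01)
    (δ lam H C : ℝ) (hδpos : 0 < δ) (hlam0 : 0 ≤ lam) (hH0 : 0 ≤ H) (hC0 : 0 ≤ C)
    (hCrec : C * lam ^ ε + H / δ ≤ C)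
    (hδle : ∀ i, ∀ x ∈ I01, δ ≤ derivWithin (g i) I01 x)
    (hlamle : ∀ i, ∀ x ∈ I01, derivWithin (g i) I01 x ≤ lam)
    (hH : ∀ i, ∀ x ∈ I01, ∀ y ∈ I01,
      |derivWithin (g i) I01 x - derivWithin (g i) I01 y| ≤ H * |x - y| ^ ε) :
    ∀ (v : List (Fin d)) (A B α β : ℝ), A ∈ I01 → B ∈ I01 → A ≤ α → α ≤ β → β ≤ B → A < B →
      (β - α) / (B - A) * Real.exp (-(C * (B - A) ^ ε))
          ≤ (wordMap g v β - wordMap g v α) / (wordMap g v B - wordMap g v A) ∧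
        (wordMap g v β - wordMap g v α) / (wordMap g v B - wordMap g v A)
          ≤ (β - α) / (B - A) * Real.exp (C * (B - A) ^ ε) := by
  intro v
  induction v with
  | nil =>
    intro A B α β hA hB h1 h2 h3 hAB
    simp only [wordMap, id_eq]
    have hr0 : 0 ≤ (β - α) / (B - A) := by
      apply div_nonneg <;> linarith
    have hs0 : 0 ≤ C * (B - A) ^ ε := by
      have : (0:ℝ) ≤ (B - A) ^ ε := Real.rpow_nonneg (by linarith) ε
      positivity
    constructor
    · nlinarith [Real.exp_le_one_iff.mpr (by linarith : -(C * (B - A) ^ ε) ≤ 0)]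
    · nlinarith [Real.one_le_exp (by linarith : 0 ≤ C * (B - A) ^ ε)]
  | cons i v ih =>
    intro A B α β hA hB h1 h2 h3 hAB
    have hα : α ∈ I01 := ⟨le_trans hA.1 h1, le_trans h2 (le_trans h3 hB.2)⟩
    have hβ : β ∈ I01 := ⟨le_trans hα.1 h2, le_trans h3 hB.2⟩
    have hinc := fun (x y : ℝ) hx hy hxy =>
      incr_bounds (g i) (hsm i) δ lam (hδle i) (hlamle i) (x := x) (y := y) hx hy hxy
    have hgA : g i A ∈ I01 := hmaps i hA
    have hgB : g i B ∈ I01 := hmaps i hB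
    have m1 : g i A ≤ g i α := by nlinarith [(hinc A α hA hα h1).1]
    have m2 : g i α ≤ g i β := by nlinarith [(hinc α β hα hβ h2).1]
    have m3 : g i β ≤ g i B := by nlinarith [(hinc β B hβ hB h3).1]
    have mAB : g i A < g i B := by nlinarith [(hinc A B hA hB hAB.le).1]
    have hBA : (0:ℝ) < B - A := by linarith
    have hsB : (0:ℝ) ≤ (B - A) ^ ε := Real.rpow_nonneg hBA.le ε
    -- contraction of the base
    have hcontr : (g i B - g i A) ^ ε ≤ lam ^ ε * (B - A) ^ ε := by
      rw [← Real.mul_rpow hlam0 hBA.le]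
      exact Real.rpow_le_rpow (by linarith) (hinc A B hA hB hAB.le).2 hε.le
    have hlamε : 0 ≤ lam ^ ε := Real.rpow_nonneg hlam0 ε
    have hIH := ih (g i A) (g i B) (g i α) (g i β) hgA hgB m1 m2 m3 mAB
    have hSS := single_step ε hε (g i) (hsm i) δ H hδpos hH0 (hδle i) (hH i)
      hA hB h1 h2 h3 hAB
    -- abbreviations
    set F := wordMap g v with hF
    have hgr0 : 0 ≤ (g i β - g i α) / (g i B - g i A) := by
      apply div_nonneg <;> linarith
    have hr0 : 0 ≤ (β - α) / (B - A) := by apply div_nonneg <;> linarith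
    have hexp_le : Real.exp (C * (g i B - g i A) ^ ε)
        ≤ Real.exp (C * (lam ^ ε * (B - A) ^ ε)) :=
      Real.exp_le_exp.mpr (mul_le_mul_of_nonneg_left hcontr hC0)
    have hexp_ge : Real.exp (-(C * (lam ^ ε * (B - A) ^ ε)))
        ≤ Real.exp (-(C * (g i B - g i A) ^ ε)) :=
      Real.exp_le_exp.mpr (by nlinarith [mul_le_mul_of_nonneg_left hcontr hC0])
    have hsum_le : C * (lam ^ ε * (B - A) ^ ε) + H / δ * (B - A) ^ ε ≤ C * (B - A) ^ ε := by
      nlinarith [mul_le_mul_of_nonneg_right hCrec hsB]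
    constructor
    · -- lower bound
      show (β - α) / (B - A) * Real.exp (-(C * (B - A) ^ ε))
          ≤ (F (g i β) - F (g i α)) / (F (g i B) - F (g i A))
      calc (β - α) / (B - A) * Real.exp (-(C * (B - A) ^ ε))
          ≤ (β - α) / (B - A) *
            (Real.exp (-(H / δ * (B - A) ^ ε)) * Real.exp (-(C * (lam ^ ε * (B - A) ^ ε)))) := by
            apply mul_le_mul_of_nonneg_left _ hr0
            rw [← Real.exp_add]
            apply Real.exp_le_exp.mpr
            linarith
        _ = ((β - α) / (B - A) * Real.exp (-(H / δ * (B - A) ^ ε))) *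
              Real.exp (-(C * (lam ^ ε * (B - A) ^ ε))) := by ring
        _ ≤ (g i β - g i α) / (g i B - g i A) * Real.exp (-(C * (g i B - g i A) ^ ε)) := by
            apply mul_le_mul hSS.1 hexp_ge (Real.exp_pos _).le hgr0
        _ ≤ (F (g i β) - F (g i α)) / (F (g i B) - F (g i A)) := hIH.1
    · show (F (g i β) - F (g i α)) / (F (g i B) - F (g i A))
          ≤ (β - α) / (B - A) * Real.exp (C * (B - A) ^ ε)
      calc (F (g i β) - F (g i α)) / (F (g i B) - F (g i A))
          ≤ (g i β - g i α) / (g i B - g i A) * Real.exp (C * (g i B - g i A) ^ ε) := hIH.2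
        _ ≤ ((β - α) / (B - A) * Real.exp (H / δ * (B - A) ^ ε)) *
              Real.exp (C * (lam ^ ε * (B - A) ^ ε)) := by
            apply mul_le_mul hSS.2 hexp_le (Real.exp_pos _).le (by positivity)
        _ = (β - α) / (B - A) *
              (Real.exp (H / δ * (B - A) ^ ε) * Real.exp (C * (lam ^ ε * (B - A) ^ ε))) := by ring
        _ ≤ (β - α) / (B - A) * Real.exp (C * (B - A) ^ ε) := by
            apply mul_le_mul_of_nonneg_left _ hr0
            rw [← Real.exp_add]
            exact Real.exp_le_exp.mpr (by linarith)

lemma sandwich_abs {S r x C : ℝ} (hr0 : 0 ≤ r) (hr1 : r ≤ 1) (hx0 : 0 ≤ x) (hx1 : x ≤ 1)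
    (hC : 0 ≤ C)
    (hlow : r * Real.exp (-(C * x)) ≤ S) (hup : S ≤ r * Real.exp (C * x)) :
    |S - r| ≤ C * Real.exp C * x := by
  have hcx0 : 0 ≤ C * x := by positivity
  have h1 : Real.exp (C * x) ≤ Real.exp C := Real.exp_le_exp.mpr (by nlinarith)
  have h2 : -(C * x) + 1 ≤ Real.exp (-(C * x)) := Real.add_one_le_exp _
  have h3 : Real.exp (C * x) * Real.exp (-(C * x)) = 1 := by
    rw [← Real.exp_add]; simp
  have h4 : (1:ℝ) ≤ Real.exp C := Real.one_le_exp hC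
  have hep := Real.exp_pos (C * x)
  have hep' := Real.exp_pos (-(C * x))
  have h5 : (1:ℝ) ≤ Real.exp (C * x) := Real.one_le_exp hcx0
  have h6 := mul_le_mul_of_nonneg_left h1 hcx0
  rw [abs_sub_le_iff]
  constructor
  · -- S - r ≤ ...
    have e1 : Real.exp (C * x) - 1 ≤ C * x * Real.exp (C * x) := by nlinarith
    have t1 : r * (Real.exp (C * x) - 1) ≤ Real.exp (C * x) - 1 := by nlinarith
    nlinarith
  · -- r - S ≤ ...
    have e2 : 1 - Real.exp (-(C * x)) ≤ C * x := by nlinarith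
    have t2 : r * (1 - Real.exp (-(C * x))) ≤ 1 - Real.exp (-(C * x)) := by nlinarith
    have t3 : C * x * 1 ≤ C * x * Real.exp C := mul_le_mul_of_nonneg_left h4 hcx0
    nlinarith

lemma dword_split (j : ℕ → Fin d) {p n : ℕ} (h : p ≤ n) :
    dword j n = dword j p ++ List.ofFn (fun i : Fin (n - p) => j (p + (i : ℕ))) := by
  obtain ⟨k, rfl⟩ := Nat.exists_eq_add_of_le h
  simp only [dword, Nat.add_sub_cancel_left, List.ofFn_add]
  congr 1

end Aux
/-- for a `C^{1+ε}` Cantor system there is `K > 0` such that for all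
`j ≠ j'` (with `p = #(j∩j')`) and all `n ≥ p`,
`|S_n(j|_n) - S_n(j'|_n)|_∞ ≤ K |I_{j∩j'}|^ε`. -/
theorem stmt8 (d : ℕ) (hd : 2 ≤ d) (ε : ℝ) (hε : ε ∈ Set.Ioc (0:ℝ) 1)
    (g : Fin d → ℝ → ℝ) (hg : IsCantorSystem 1 ε g) :
    ∃ K > 0, ∀ j j' : ℕ → Fin d, ∀ p : ℕ,
      (∀ t < p, j t = j' t) → j p ≠ j' p →
      ∀ n, p ≤ n → ∀ m,
        |scalingData g (dword j n) m - scalingData g (dword j' n) m|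
          ≤ K * wordLen g (dword j p) ^ ε := by
  obtain ⟨hε0, hε1⟩ := hε
  haveI : Nonempty (Fin d) := ⟨⟨0, by omega⟩⟩
  have hUD : UniqueDiffOn ℝ I01 := uniqueDiffOn_Icc zero_lt_one
  have hne : (Set.Icc (0:ℝ) 1).Nonempty := Set.nonempty_Icc.mpr zero_le_one
  have h01 : (0:ℝ) ∈ I01 := ⟨le_refl _, zero_le_one⟩
  have h11 : (1:ℝ) ∈ I01 := ⟨zero_le_one, le_refl _⟩
  have hcd : ∀ i, ContinuousOn (derivWithin (g i) I01) I01 :=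
    fun i => (hg.smooth i).continuousOn_derivWithin hUD le_rfl
  -- per-branch lower bound of the derivative
  have hmin : ∀ i : Fin d, ∃ δ, 0 < δ ∧ ∀ x ∈ I01, δ ≤ derivWithin (g i) I01 x := by
    intro i
    obtain ⟨x0, hx0, hm⟩ := isCompact_Icc.exists_isMinOn hne (hcd i)
    exact ⟨_, hg.deriv_pos i x0 hx0, fun x hx => hm hx⟩
  -- per-branch upper bound of the derivative
  have hmaxx : ∀ i : Fin d, ∃ lam, lam < 1 ∧ 0 ≤ lam ∧
      ∀ x ∈ I01, derivWithin (g i) I01 x ≤ lam := by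
    intro i
    obtain ⟨x0, hx0, hm⟩ := isCompact_Icc.exists_isMaxOn hne (hcd i)
    exact ⟨_, hg.deriv_lt_one i x0 hx0, (hg.deriv_pos i x0 hx0).le, fun x hx => hm hx⟩
  choose δf hδf0 hδf using hmin
  choose lamf hlamf1 hlamf0 hlamf using hmaxx
  choose Hf hHf0 hHfb using hg.holder
  -- global constants
  set δ : ℝ := Finset.univ.inf' Finset.univ_nonempty δf with hδdef
  set lam : ℝ := Finset.univ.sup' Finset.univ_nonempty lamf with hlamdef
  set H : ℝ := Finset.univ.sup' Finset.univ_nonempty Hf with hHdef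
  have hδpos : 0 < δ := (Finset.lt_inf'_iff _).mpr fun i _ => hδf0 i
  have hlam1 : lam < 1 := (Finset.sup'_lt_iff _).mpr fun i _ => hlamf1 i
  have hlam0 : 0 ≤ lam :=
    le_trans (hlamf0 (Classical.arbitrary (Fin d)))
      (Finset.le_sup' lamf (Finset.mem_univ _))
  have hHpos : 0 < H :=
    lt_of_lt_of_le (hHf0 (Classical.arbitrary (Fin d)))
      (Finset.le_sup' Hf (Finset.mem_univ _))
  have hδle : ∀ i, ∀ x ∈ I01, δ ≤ derivWithin (g i) I01 x :=
    fun i x hx => le_trans (Finset.inf'_le δf (Finset.mem_univ i)) (hδf i x hx)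
  have hlamle : ∀ i, ∀ x ∈ I01, derivWithin (g i) I01 x ≤ lam :=
    fun i x hx => le_trans (hlamf i x hx) (Finset.le_sup' lamf (Finset.mem_univ i))
  have hH : ∀ i, ∀ x ∈ I01, ∀ y ∈ I01,
      |derivWithin (g i) I01 x - derivWithin (g i) I01 y| ≤ H * |x - y| ^ ε := by
    intro i x hx y hy
    have h1 := hHfb i x hx y hy
    rw [iteratedDerivWithin_one] at h1
    refine le_trans h1 (mul_le_mul_of_nonneg_right
      (Finset.le_sup' Hf (Finset.mem_univ i)) (Real.rpow_nonneg (abs_nonneg _) ε))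
  have hlamε : lam ^ ε < 1 := Real.rpow_lt_one hlam0 hlam1 hε0
  have hlamε0 : 0 ≤ lam ^ ε := Real.rpow_nonneg hlam0 ε
  set C : ℝ := (H / δ) / (1 - lam ^ ε) with hCdef
  have hC0 : 0 < C := by
    apply div_pos (div_pos hHpos hδpos); linarith
  have hCrec : C * lam ^ ε + H / δ ≤ C := by
    have h7 : C * (1 - lam ^ ε) = H / δ := by
      rw [hCdef, div_mul_cancel₀ _ (show (1:ℝ) - lam ^ ε ≠ 0 by linarith)]
    nlinarith
  -- monotonicity of wordMaps
  have hwle : ∀ (w : List (Fin d)) (x y : ℝ), x ∈ I01 → y ∈ I01 → x ≤ y →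
      wordMap g w x ≤ wordMap g w y := by
    intro w
    induction w with
    | nil => intro x y _ _ h; exact h
    | cons i w ih =>
      intro x y hx hy h
      have := (incr_bounds (g i) (hg.smooth i) δ lam (hδle i) (hlamle i) hx hy h).1
      exact ih _ _ (hg.maps i hx) (hg.maps i hy) (by nlinarith)
  have hwlt : ∀ (w : List (Fin d)) (x y : ℝ), x ∈ I01 → y ∈ I01 → x < y →
      wordMap g w x < wordMap g w y := by
    intro w
    induction w with
    | nil => intro x y _ _ h; exact h
    | cons i w ih =>
      intro x y hx hy h
      have := (incr_bounds (g i) (hg.smooth i) δ lam (hδle i) (hlamle i) hx hy h.le).1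
      exact ih _ _ (hg.maps i hx) (hg.maps i hy) (by nlinarith)
  refine ⟨2 * (C * Real.exp C), by positivity, ?_⟩
  intro j j' p hagree _ n hpn m
  have hpre' : dword j' p = dword j p := by
    unfold dword
    exact congrArg _ (funext fun i => (hagree i i.isLt).symm)
  set Gp : ℝ → ℝ := wordMap g (dword j p) with hGp
  have hA : Gp 0 ∈ I01 := wordMap_mem g hg.maps _ h01
  have hB : Gp 1 ∈ I01 := wordMap_mem g hg.maps _ h11
  have hAB : Gp 0 < Gp 1 := hwlt _ 0 1 h01 h11 zero_lt_one
  have hBA1 : Gp 1 - Gp 0 ≤ 1 := by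
    have := hA.1; have := hB.2; linarith
  have hsε0 : 0 ≤ (Gp 1 - Gp 0) ^ ε := Real.rpow_nonneg (by linarith) ε
  have hsε1 : (Gp 1 - Gp 0) ^ ε ≤ 1 := Real.rpow_le_one (by linarith) hBA1 hε0.le
  -- key estimate for a single ratio
  have key : ∀ a b : ℝ, a ∈ I01 → b ∈ I01 → a ≤ b → ∀ v : List (Fin d),
      |(wordMap g v (Gp b) - wordMap g v (Gp a)) /
          (wordMap g v (Gp 1) - wordMap g v (Gp 0)) -
        (Gp b - Gp a) / (Gp 1 - Gp 0)|
        ≤ C * Real.exp C * (Gp 1 - Gp 0) ^ ε := by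
    intro a b ha hb hab v
    have hα : Gp 0 ≤ Gp a := hwle _ 0 a h01 ha ha.1
    have hβ : Gp b ≤ Gp 1 := hwle _ b 1 hb h11 hb.2
    have hαβ : Gp a ≤ Gp b := hwle _ a b ha hb hab
    have hwd := word_distortion ε hε0 g hg.maps hg.smooth δ lam H C hδpos hlam0
      hHpos.le hC0.le hCrec hδle hlamle hH v (Gp 0) (Gp 1) (Gp a) (Gp b)
      hA hB hα hαβ hβ hAB
    exact sandwich_abs (div_nonneg (by linarith) (by linarith))
      ((div_le_one (by linarith)).mpr (by linarith)) hsε0 hsε1 hC0.le hwd.1 hwd.2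
  -- relate scalingData of an extension to such a ratio
  have main : ∀ jj : ℕ → Fin d, dword jj p = dword j p →
      |scalingData g (dword jj n) m - scalingData g (dword j p) m|
        ≤ C * Real.exp C * (Gp 1 - Gp 0) ^ ε := by
    intro jj hpre
    have hcomp : ∀ x : ℝ, wordMap g (dword jj n) x
        = wordMap g (List.ofFn fun i : Fin (n - p) => jj (p + (i : ℕ))) (Gp x) := by
      intro x
      rw [dword_split jj hpn, wordMap_append, hpre]
    by_cases h : (m : ℕ) < d
    · have ha : g ⟨(m : ℕ), h⟩ 0 ∈ I01 := hg.maps _ h01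
      have hb : g ⟨(m : ℕ), h⟩ 1 ∈ I01 := hg.maps _ h11
      have hab : g ⟨(m : ℕ), h⟩ 0 ≤ g ⟨(m : ℕ), h⟩ 1 := by
        have h9 := (incr_bounds (g ⟨(m : ℕ), h⟩) (hg.smooth ⟨(m : ℕ), h⟩) δ lam
          (hδle ⟨(m : ℕ), h⟩) (hlamle ⟨(m : ℕ), h⟩) h01 h11 zero_le_one).1
        nlinarith
      have e1 : scalingData g (dword jj n) m
          = (wordMap g (List.ofFn fun i : Fin (n - p) => jj (p + (i : ℕ)))
              (Gp (g ⟨(m : ℕ), h⟩ 1))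
            - wordMap g (List.ofFn fun i : Fin (n - p) => jj (p + (i : ℕ)))
              (Gp (g ⟨(m : ℕ), h⟩ 0))) /
            (wordMap g (List.ofFn fun i : Fin (n - p) => jj (p + (i : ℕ))) (Gp 1)
            - wordMap g (List.ofFn fun i : Fin (n - p) => jj (p + (i : ℕ))) (Gp 0)) := by
        simp only [scalingData, dif_pos h, wordLen, wordMap, hcomp]
      have e2 : scalingData g (dword j p) m
          = (Gp (g ⟨(m : ℕ), h⟩ 1) - Gp (g ⟨(m : ℕ), h⟩ 0)) / (Gp 1 - Gp 0) := by
        simp only [scalingData, dif_pos h, wordLen, wordMap, hGp]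
      rw [e1, e2]
      exact key _ _ ha hb hab _
    · have ha : g ⟨(m : ℕ) - d, by have := m.isLt; omega⟩ 1 ∈ I01 := hg.maps _ h11
      have hb : g ⟨(m : ℕ) - d + 1, by have := m.isLt; omega⟩ 0 ∈ I01 := hg.maps _ h01
      have hab : g ⟨(m : ℕ) - d, by have := m.isLt; omega⟩ 1
          ≤ g ⟨(m : ℕ) - d + 1, by have := m.isLt; omega⟩ 0 := by
        refine (hg.ordered _ _ ?_).le
        simp only [Fin.mk_lt_mk]
        omega
      have e1 : scalingData g (dword jj n) m
          = (wordMap g (List.ofFn fun i : Fin (n - p) => jj (p + (i : ℕ)))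
              (Gp (g ⟨(m : ℕ) - d + 1, by have := m.isLt; omega⟩ 0))
            - wordMap g (List.ofFn fun i : Fin (n - p) => jj (p + (i : ℕ)))
              (Gp (g ⟨(m : ℕ) - d, by have := m.isLt; omega⟩ 1))) /
            (wordMap g (List.ofFn fun i : Fin (n - p) => jj (p + (i : ℕ))) (Gp 1)
            - wordMap g (List.ofFn fun i : Fin (n - p) => jj (p + (i : ℕ))) (Gp 0)) := by
        simp only [scalingData, dif_neg h, wordLen, wordMap, hcomp]
      have e2 : scalingData g (dword j p) m
          = (Gp (g ⟨(m : ℕ) - d + 1, by have := m.isLt; omega⟩ 0)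
            - Gp (g ⟨(m : ℕ) - d, by have := m.isLt; omega⟩ 1)) / (Gp 1 - Gp 0) := by
        simp only [scalingData, dif_neg h, wordLen, wordMap, hGp]
      rw [e1, e2]
      exact key _ _ ha hb hab _
  have hj := main j rfl
  have hj' := main j' hpre'
  have htri := abs_sub_le (scalingData g (dword j n) m) (scalingData g (dword j p) m)
    (scalingData g (dword j' n) m)
  rw [abs_sub_comm (scalingData g (dword j p) m)] at htri
  have : wordLen g (dword j p) = Gp 1 - Gp 0 := rfl
  rw [this]
  linarith
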